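/- Let μ ∈ (0,1), ε ∈ (0,1), and let V satisfy V(0,ρ) = 0 and V(t+1,ρ) = max{(1−μ+μρ) + μV(t,g(ρ)) + (1−μ)V(t,ρ), (1−μ)(1−ρ) + (1−μ)V(t,g⁻(ρ)) + μV(t,ρ)}. Then for all N ∈ ℕ and ρ ∈ (0,1), V(N,ρ) ≥ N(1−μ) + (1−μ)·Σ_{t=0}^{N−1} μρ_t where ρ_0 = ρ and the sequence alternates as in the lie/truth strategy; in particular liminf_{N→∞} V(N,ρ)/N ≥ 1−μ + μ(1−μ)(ρ − g(ρ)). -/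

import Mathlib

noncomputable def mwG (ε ρ : ℝ) : ℝ := 1 / (1 + (1/ρ - 1) / ε)
noncomputable def mwGinv (ε ρ : ℝ) : ℝ := 1 / (1 + (1/ρ - 1) * ε)

/-- Expected-weight contribution sequence of the lie-at-ρ / truth-at-g(ρ) strategy:
at time 0 the chain is at ρ; from time 1 on the expected per-round excess is
μ(ρ − g(ρ)) (stationary distribution (1−μ, μ)). -/
noncomputable def lieTruthSeq (ε ρ : ℝ) : ℕ → ℝ
  | 0 => ρ
  | _ + 1 => ρ - mwG ε ρ

lemma mwG_mem {ε ρ : ℝ} (hε : ε ∈ Set.Ioo (0:ℝ) 1) (hρ : ρ ∈ Set.Ioo (0:ℝ) 1) :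
    mwG ε ρ ∈ Set.Ioo (0:ℝ) 1 ∧ mwG ε ρ ≤ ρ := by
  obtain ⟨hε0, hε1⟩ := hε
  obtain ⟨hρ0, hρ1⟩ := hρ
  have hx : 0 < 1/ρ - 1 := by
    have := one_lt_one_div hρ0 hρ1
    linarith
  have hxε : 0 < (1/ρ - 1) / ε := div_pos hx hε0
  have hD : (1:ℝ) < 1 + (1/ρ - 1) / ε := by linarith
  have hD0 : (0:ℝ) < 1 + (1/ρ - 1) / ε := by linarith
  refine ⟨⟨by rw [mwG]; positivity, ?_⟩, ?_⟩
  · rw [mwG, div_lt_one hD0]; exact hD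
  · have hge : 1/ρ - 1 ≤ (1/ρ - 1) / ε := by
      rw [le_div_iff₀ hε0]
      nlinarith
    have h1ρ : 1/ρ ≤ 1 + (1/ρ - 1) / ε := by linarith
    have := one_div_le_one_div_of_le (by positivity : (0:ℝ) < 1/ρ) h1ρ
    rw [one_div_one_div] at this
    exact this

lemma mwGinv_mem {ε ρ : ℝ} (hε : ε ∈ Set.Ioo (0:ℝ) 1) (hρ : ρ ∈ Set.Ioo (0:ℝ) 1) :
    mwGinv ε ρ ∈ Set.Ioo (0:ℝ) 1 := by
  obtain ⟨hε0, hε1⟩ := hε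
  obtain ⟨hρ0, hρ1⟩ := hρ
  have hx : 0 < 1/ρ - 1 := by
    have := one_lt_one_div hρ0 hρ1
    linarith
  have hxε : 0 < (1/ρ - 1) * ε := by positivity
  have hD0 : (0:ℝ) < 1 + (1/ρ - 1) * ε := by linarith
  constructor
  · rw [mwGinv]; positivity
  · rw [mwGinv, div_lt_one hD0]; linarith

lemma mwGinv_mwG {ε ρ : ℝ} (hε : ε ∈ Set.Ioo (0:ℝ) 1) (hρ : ρ ∈ Set.Ioo (0:ℝ) 1) :
    mwGinv ε (mwG ε ρ) = ρ := by
  obtain ⟨hε0, hε1⟩ := hε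
  obtain ⟨hρ0, hρ1⟩ := hρ
  have hx : 0 < 1/ρ - 1 := by
    have := one_lt_one_div hρ0 hρ1
    linarith
  have hD0 : (0:ℝ) < 1 + (1/ρ - 1) / ε := by
    have : 0 < (1/ρ - 1) / ε := div_pos hx hε0
    linarith
  rw [mwG, mwGinv, one_div_one_div]
  field_simp
  ring

/-- expected payoff of the strategy that lies at state ρ. -/
noncomputable def auxA (μ ρ g : ℝ) : ℕ → ℝ
  | 0 => 0
  | n + 1 => (1 - μ) + μ * ρ + n * ((1 - μ) + (1 - μ) * μ * (ρ - g))

/-- expected payoff of the strategy, started at state g(ρ) (telling truth there). -/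
noncomputable def auxB (μ ρ g : ℝ) : ℕ → ℝ
  | 0 => 0
  | n + 1 => auxA μ ρ g (n + 1) - (μ * ρ + (1 - μ) * g)

theorem value_lower_bound (ε μ : ℝ) (hε : ε ∈ Set.Ioo (0:ℝ) 1)
    (hμ : μ ∈ Set.Ioo (0:ℝ) 1) (V : ℕ → ℝ → ℝ)
    (hV0 : ∀ ρ ∈ Set.Ioo (0:ℝ) 1, V 0 ρ = 0)
    (hVrec : ∀ t, ∀ ρ ∈ Set.Ioo (0:ℝ) 1,
      V (t+1) ρ = max ((1 - μ + μ * ρ) + μ * V t (mwG ε ρ) + (1 - μ) * V t ρ)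
                      ((1 - μ) * (1 - ρ) + (1 - μ) * V t (mwGinv ε ρ) + μ * V t ρ)) :
    ∀ ρ ∈ Set.Ioo (0:ℝ) 1,
      (∀ N : ℕ, V N ρ ≥ N * (1 - μ)
          + (1 - μ) * ∑ t ∈ Finset.range N, μ * lieTruthSeq ε ρ t) ∧
      Filter.atTop.liminf (fun N : ℕ => V N ρ / N)
        ≥ 1 - μ + μ * (1 - μ) * (ρ - mwG ε ρ) := by
  intro ρ hρ
  obtain ⟨hμ0, hμ1⟩ := hμ
  obtain ⟨hρ0, hρ1⟩ := hρ
  have hρ' : ρ ∈ Set.Ioo (0:ℝ) 1 := ⟨hρ0, hρ1⟩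
  set g := mwG ε ρ with hgdef
  obtain ⟨hg, hgρ⟩ := mwG_mem hε hρ'
  have hinv : mwGinv ε g = ρ := mwGinv_mwG hε hρ'
  have hc : (0:ℝ) ≤ 1 - μ := by linarith
  -- joint induction for the two-state strategy
  have key : ∀ N, V N ρ ≥ auxA μ ρ g N ∧ V N g ≥ auxB μ ρ g N := by
    intro N
    induction N with
    | zero => simp [auxA, auxB, hV0 ρ hρ', hV0 g hg]
    | succ N ih =>
      obtain ⟨ihA, ihB⟩ := ih
      have h1 : V (N+1) ρ ≥ (1 - μ + μ * ρ) + μ * V N g + (1 - μ) * V N ρ := by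
        rw [hVrec N ρ hρ', ← hgdef]
        exact le_max_left _ _
      have h2 : V (N+1) g ≥ (1 - μ) * (1 - g) + (1 - μ) * V N ρ + μ * V N g := by
        rw [hVrec N g hg, hinv]
        exact le_max_right _ _
      constructor
      · have : (1 - μ + μ * ρ) + μ * auxB μ ρ g N + (1 - μ) * auxA μ ρ g N
            ≤ (1 - μ + μ * ρ) + μ * V N g + (1 - μ) * V N ρ := by
          have := mul_le_mul_of_nonneg_left ihB (le_of_lt hμ0)
          have := mul_le_mul_of_nonneg_left ihA hc
          linarith
        refine le_trans ?_ (le_trans this h1)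
        cases N with
        | zero => simp [auxA, auxB]
        | succ n =>
          apply le_of_eq
          simp only [auxA, auxB]
          push_cast
          ring
      · have : (1 - μ) * (1 - g) + (1 - μ) * auxA μ ρ g N + μ * auxB μ ρ g N
            ≤ (1 - μ) * (1 - g) + (1 - μ) * V N ρ + μ * V N g := by
          have := mul_le_mul_of_nonneg_left ihB (le_of_lt hμ0)
          have := mul_le_mul_of_nonneg_left ihA hc
          linarith
        refine le_trans ?_ (le_trans this h2)
        cases N with
        | zero =>
          apply le_of_eq
          simp only [auxA, auxB]
          push_cast
          ring
        | succ n =>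
          apply le_of_eq
          simp only [auxA, auxB]
          push_cast
          ring
  -- the sum in the statement
  have hsum : ∀ n : ℕ, ∑ t ∈ Finset.range (n+1), μ * lieTruthSeq ε ρ t
      = μ * ρ + n * (μ * (ρ - g)) := by
    intro n
    induction n with
    | zero => simp [lieTruthSeq]
    | succ m ih =>
      rw [Finset.sum_range_succ, ih]
      have : lieTruthSeq ε ρ (m+1) = ρ - g := by simp [lieTruthSeq, hgdef]
      rw [this]
      push_cast
      ring
  have part1 : ∀ N : ℕ, V N ρ ≥ N * (1 - μ)
      + (1 - μ) * ∑ t ∈ Finset.range N, μ * lieTruthSeq ε ρ t := by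
    intro N
    cases N with
    | zero => simp [hV0 ρ hρ']
    | succ n =>
      refine le_trans ?_ (key (n+1)).1
      rw [hsum n]
      simp only [auxA]
      push_cast
      nlinarith [mul_pos hμ0 hρ0, sq_nonneg μ]
  refine ⟨part1, ?_⟩
  -- lower bound on V N ρ / N for N ≥ 1
  have hlb : ∀ n : ℕ, 1 - μ + μ * (1 - μ) * (ρ - g) ≤ V (n+1) ρ / ((n:ℝ)+1) := by
    intro n
    rw [le_div_iff₀ (by positivity : (0:ℝ) < (n:ℝ)+1)]
    have h := part1 (n+1)
    rw [hsum n] at h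
    push_cast at h ⊢
    nlinarith [mul_nonneg (mul_nonneg hc (le_of_lt hμ0)) hg.1.le]
  -- upper bound V n ρ' ≤ 2n (for coboundedness)
  have hub : ∀ n : ℕ, ∀ ρ' ∈ Set.Ioo (0:ℝ) 1, V n ρ' ≤ 2 * n := by
    intro n
    induction n with
    | zero => intro ρ' hρ'; simp [hV0 ρ' hρ']
    | succ m ih =>
      intro ρ' hm
      rw [hVrec m ρ' hm]
      obtain ⟨hG, _⟩ := mwG_mem hε hm
      have hGi := mwGinv_mem hε hm
      have i1 := ih _ hG
      have i2 := ih _ hGi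
      have i3 := ih _ hm
      apply max_le
      · push_cast; nlinarith [hm.1, hm.2]
      · push_cast; nlinarith [hm.1, hm.2]
  apply Filter.le_liminf_of_le
  · apply Filter.isCoboundedUnder_ge_of_eventually_le Filter.atTop (x := 2)
    filter_upwards [Filter.eventually_ge_atTop 1] with n hn
    have hn0 : (0:ℝ) < n := by exact_mod_cast hn
    rw [div_le_iff₀ hn0]
    have := hub n ρ hρ'
    linarith
  · filter_upwards [Filter.eventually_ge_atTop 1] with n hn
    obtain ⟨m, rfl⟩ := Nat.exists_eq_add_of_le hn
    have := hlb m
    rw [add_comm 1 m]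
    push_cast at this ⊢
    exact this
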